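/- Let E be a Banach lattice and suppose (uₙ*) is a finitely disjoint sequence in the positive cone of the dual E*. If there exist u₀ ∈ E⁺ and δ>0 such that ⟨u₀, uₙ*⟩ ≥ δ for all n, then there exist a subsequence (u*_{n_k}), a disjoint sequence (v_k) in the order interval [0,u₀], and ε>0 such that ⟨v_k, u*_{n_k}⟩ ≥ ε for all k. -/

import Mathlib

open Filter Topology

set_option linter.unusedSectionVars false
set_option linter.unusedVariables false
set_option maxHeartbeats 1000000

variable {E : Type*} [NormedAddCommGroup E] [Lattice E] [HasSolidNorm E] [IsOrderedAddMonoid E]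
  [NormedSpace ℝ E]

/-- Riesz–Kantorovich formula for disjointness of two positive functionals:
`φ ⊓ χ = 0` iff `inf { φ(y) + χ(x-y) : 0 ≤ y ≤ x } = 0` for all `x ≥ 0`. -/
def DualDisjointPos (φ χ : E →L[ℝ] ℝ) : Prop :=
  ∀ x : E, 0 ≤ x → ∀ ε : ℝ, 0 < ε → ∃ y : E, 0 ≤ y ∧ y ≤ x ∧ φ y + χ (x - y) < ε

/-- A sequence of positive functionals is finitely disjoint if for each `N` it contains
`N` mutually disjoint terms. -/
def FinitelyDisjointDual (u : ℕ → E →L[ℝ] ℝ) : Prop :=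
  ∀ N : ℕ, ∃ i : Fin N → ℕ, StrictMono i ∧
    ∀ k l : Fin N, k ≠ l → DualDisjointPos (u (i k)) (u (i l))


private lemma my_sup_le_add {a b : E} (ha : 0 ≤ a) (hb : 0 ≤ b) : a ⊔ b ≤ a + b :=
  sup_le (le_add_of_nonneg_right hb) (le_add_of_nonneg_left ha)

private lemma my_inf_decomp (x y : E) : x = x ⊓ y + ((x - y) ⊔ 0) := by
  have h1 : (x ⊔ y) - y = (x - y) ⊔ (y - y) := sup_sub x y y
  rw [sub_self] at h1
  rw [← h1, ← add_sub_assoc, inf_add_sup, add_sub_cancel_right]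

private lemma my_inf_add_le {a b c : E} (ha : 0 ≤ a) (hb : 0 ≤ b) (hc : 0 ≤ c) :
    (a + b) ⊓ c ≤ a ⊓ c + b ⊓ c := by
  set d := (a + b) ⊓ c with hd
  have hda : d ⊓ a ≤ a ⊓ c := le_inf inf_le_right ((inf_le_left).trans inf_le_right)
  have hdb : (d - a) ⊔ 0 ≤ b ⊓ c := by
    refine sup_le (le_inf ?_ ?_) (le_inf hb hc)
    · exact sub_le_iff_le_add'.2 inf_le_left
    · exact sub_le_iff_le_add.2 (le_add_of_le_of_nonneg inf_le_right ha)
  calc d = d ⊓ a + ((d - a) ⊔ 0) := my_inf_decomp d a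
  _ ≤ a ⊓ c + b ⊓ c := add_le_add hda hdb

private lemma my_disj_add {a b c : E} (ha : 0 ≤ a) (hb : 0 ≤ b) (hc : 0 ≤ c)
    (hac : a ⊓ c = 0) (hbc : b ⊓ c = 0) : (a + b) ⊓ c = 0 := by
  have h0 : (0:E) ≤ (a + b) ⊓ c := le_inf (by positivity) hc
  have := my_inf_add_le ha hb hc
  rw [hac, hbc, add_zero] at this
  exact le_antisymm this h0

private lemma my_sum_disj_elem {F : Finset ℕ} {w : ℕ → E} {c : E}
    (hw : ∀ i ∈ F, 0 ≤ w i) (hd : ∀ i ∈ F, w i ⊓ c = 0) (hc : 0 ≤ c) :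
    (∑ i ∈ F, w i) ⊓ c = 0 := by
  classical
  induction F using Finset.induction_on with
  | empty => simpa using hc
  | @insert a s hns ih =>
    rw [Finset.sum_insert hns]
    exact my_disj_add (hw a (Finset.mem_insert_self a s))
      (Finset.sum_nonneg fun i hi => hw i (Finset.mem_insert_of_mem hi))
      hc (hd a (Finset.mem_insert_self a s))
      (ih (fun i hi => hw i (Finset.mem_insert_of_mem hi))
          (fun i hi => hd i (Finset.mem_insert_of_mem hi)))

private lemma my_disj_sum_le {u₀ : E} (hu₀ : 0 ≤ u₀) (F : Finset ℕ) (w : ℕ → E)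
    (hw : ∀ i ∈ F, 0 ≤ w i ∧ w i ≤ u₀)
    (hdisj : ∀ i ∈ F, ∀ j ∈ F, i ≠ j → w i ⊓ w j = 0) :
    (∑ i ∈ F, w i) ≤ u₀ := by
  classical
  induction F using Finset.induction_on with
  | empty => simpa using hu₀
  | @insert a s hns ih =>
    rw [Finset.sum_insert hns]
    have hmem := Finset.mem_insert_self a s
    have hsum0 : 0 ≤ ∑ i ∈ s, w i :=
      Finset.sum_nonneg fun i hi => (hw i (Finset.mem_insert_of_mem hi)).1
    have hsumle : (∑ i ∈ s, w i) ≤ u₀ :=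
      ih (fun i hi => hw i (Finset.mem_insert_of_mem hi))
        (fun i hi j hj hij => hdisj i (Finset.mem_insert_of_mem hi) j
          (Finset.mem_insert_of_mem hj) hij)
    have hdisj' : (∑ i ∈ s, w i) ⊓ w a = 0 :=
      my_sum_disj_elem (fun i hi => (hw i (Finset.mem_insert_of_mem hi)).1)
        (fun i hi => hdisj i (Finset.mem_insert_of_mem hi) a hmem
          (fun h => hns (h ▸ hi))) (hw a hmem).1
    have : w a + ∑ i ∈ s, w i = w a ⊔ ∑ i ∈ s, w i := by
      rw [← inf_add_sup (w a) (∑ i ∈ s, w i), inf_comm, hdisj', zero_add]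
    rw [this]
    exact sup_le (hw a hmem).2 hsumle


noncomputable def foldInf (F : Finset ℕ) (f : ℕ → E) (x : E) : E := F.fold (· ⊓ ·) x f

private lemma foldInf_insert {a : ℕ} {s : Finset ℕ} (h : a ∉ s) (f : ℕ → E) (x : E) :
    foldInf (insert a s) f x = f a ⊓ foldInf s f x := Finset.fold_insert h

private lemma foldInf_le_base (F : Finset ℕ) (f : ℕ → E) (x : E) : foldInf F f x ≤ x := by
  classical
  induction F using Finset.induction_on with
  | empty => simp [foldInf]
  | @insert a s hns ih =>
    rw [foldInf_insert hns]
    exact le_trans inf_le_right ih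

private lemma foldInf_le_mem (F : Finset ℕ) (f : ℕ → E) (x : E) {j : ℕ} (hj : j ∈ F) :
    foldInf F f x ≤ f j := by
  classical
  induction F using Finset.induction_on with
  | empty => simp at hj
  | @insert a s hns ih =>
    rw [foldInf_insert hns]
    rcases Finset.mem_insert.1 hj with h | h
    · subst h; exact inf_le_left
    · exact le_trans inf_le_right (ih h)

private lemma foldInf_nonneg (F : Finset ℕ) (f : ℕ → E) (x : E) (hx : 0 ≤ x)
    (hf : ∀ j ∈ F, 0 ≤ f j) : 0 ≤ foldInf F f x := by
  classical
  induction F using Finset.induction_on with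
  | empty => simpa [foldInf] using hx
  | @insert a s hns ih =>
    rw [foldInf_insert hns]
    exact le_inf (hf a (Finset.mem_insert_self a s))
      (ih (fun j hj => hf j (Finset.mem_insert_of_mem hj)))

private lemma sub_foldInf_le (F : Finset ℕ) (f : ℕ → E) (x : E)
    (hf : ∀ j ∈ F, f j ≤ x) :
    x - foldInf F f x ≤ ∑ j ∈ F, (x - f j) := by
  classical
  induction F using Finset.induction_on with
  | empty => simp [foldInf]
  | @insert a s hns ih =>
    rw [foldInf_insert hns, Finset.sum_insert hns]
    have h1 : x - (f a ⊓ foldInf s f x) = (x - f a) ⊔ (x - foldInf s f x) :=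
      sub_inf (f a) (foldInf s f x) x
    rw [h1]
    have h2 : (x - f a) ⊔ (x - foldInf s f x) ≤ (x - f a) + (x - foldInf s f x) :=
      my_sup_le_add (sub_nonneg.2 (hf a (Finset.mem_insert_self a s)))
        (sub_nonneg.2 (foldInf_le_base s f x))
    exact h2.trans (add_le_add le_rfl (ih (fun j hj => hf j (Finset.mem_insert_of_mem hj))))

private lemma clm_mono {ψ : E →L[ℝ] ℝ} (hψ : ∀ x : E, 0 ≤ x → 0 ≤ ψ x) {a b : E}
    (h : a ≤ b) : ψ a ≤ ψ b := by
  have := hψ (b - a) (sub_nonneg.2 h)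
  rw [map_sub] at this; linarith

/-- `y` carries `φ` and misses `χ`, both with error `ρ`, inside `[0, u₀]`. -/
def AD (u₀ : E) (φ χ : E →L[ℝ] ℝ) (ρ : ℝ) : Prop :=
  ∃ y : E, 0 ≤ y ∧ y ≤ u₀ ∧ φ (u₀ - y) ≤ ρ ∧ χ y ≤ ρ

private lemma AD.symm {u₀ : E} {φ χ : E →L[ℝ] ℝ} {ρ : ℝ} (h : AD u₀ φ χ ρ) :
    AD u₀ χ φ ρ := by
  obtain ⟨y, h0, h1, h2, h3⟩ := h
  exact ⟨u₀ - y, sub_nonneg.2 h1, sub_le_self _ h0, by simpa using h3, h2⟩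

/-- Finite disjointification with errors. -/
private lemma finite_disj (u₀ : E) (hu₀ : 0 ≤ u₀) (F : Finset ℕ) (ψ : ℕ → E →L[ℝ] ℝ)
    (hpos : ∀ i ∈ F, ∀ x : E, 0 ≤ x → 0 ≤ ψ i x) (ρ : ℕ → ℕ → ℝ)
    (hAD : ∀ i ∈ F, ∀ j ∈ F, i ≠ j → AD u₀ (ψ i) (ψ j) (ρ i j)) :
    ∃ w : ℕ → E, (∀ i ∈ F, 0 ≤ w i ∧ w i ≤ u₀) ∧
      (∀ i ∈ F, ∀ j ∈ F, i ≠ j → w i ⊓ w j = 0) ∧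
      (∀ i ∈ F, ψ i (u₀ - w i) ≤ 2 * ∑ j ∈ F.erase i, (ρ i j + ρ j i)) := by
  classical
  have hY : ∀ i j : ℕ, ∃ y : E, 0 ≤ y ∧ y ≤ u₀ ∧
      (i ∈ F → j ∈ F → i ≠ j → ψ i (u₀ - y) ≤ ρ i j ∧ ψ j y ≤ ρ i j) := by
    intro i j
    by_cases h : i ∈ F ∧ j ∈ F ∧ i ≠ j
    · obtain ⟨y, h0, h1, h2, h3⟩ := hAD i h.1 j h.2.1 h.2.2
      exact ⟨y, h0, h1, fun _ _ _ => ⟨h2, h3⟩⟩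
    · exact ⟨u₀, hu₀, le_rfl, fun h1 h2 h3 => absurd ⟨h1, h2, h3⟩ h⟩
  choose Y hY0 hY1 hYP using hY
  set yh : ℕ → E := fun i => foldInf (F.erase i) (Y i) u₀ with hyh
  have hyh0 : ∀ i, 0 ≤ yh i := fun i =>
    foldInf_nonneg _ _ _ hu₀ (fun j _ => hY0 i j)
  have hyhu : ∀ i, yh i ≤ u₀ := fun i => foldInf_le_base _ _ _
  have hyhY : ∀ i, ∀ j ∈ F.erase i, yh i ≤ Y i j := fun i j hj => foldInf_le_mem _ _ _ hj
  set c : ℕ → E := fun i => (yh i + yh i - u₀)⁺ with hc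
  set d : ℕ → E := fun i => (u₀ - (yh i + yh i))⁺ with hd
  have hcd : ∀ i, c i ⊓ d i = 0 := by
    intro i
    have h := posPart_inf_negPart_eq_zero (yh i + yh i - u₀)
    rwa [negPart_def, neg_sub, ← posPart_def] at h
  have hc0 : ∀ i, 0 ≤ c i := fun i => posPart_nonneg _
  have hd0 : ∀ i, 0 ≤ d i := fun i => posPart_nonneg _
  have hcyh : ∀ i, c i ≤ yh i := by
    intro i
    have h1 : yh i + yh i - u₀ ≤ yh i :=
      sub_le_iff_le_add.2 (add_le_add_right (hyhu i) (yh i))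
    calc c i ≤ (yh i)⁺ := posPart_mono h1
    _ = yh i := posPart_eq_self.2 (hyh0 i)
  have hcu : ∀ i, c i ≤ u₀ := fun i => (hcyh i).trans (hyhu i)
  have hdu : ∀ i, d i ≤ u₀ := by
    intro i
    calc d i ≤ u₀⁺ := posPart_mono (sub_le_self _ (add_nonneg (hyh0 i) (hyh0 i)))
    _ = u₀ := posPart_eq_self.2 hu₀
  set D : ℕ → E := fun i => foldInf (F.erase i) (fun j => d j) u₀ with hD
  have hD0 : ∀ i, 0 ≤ D i := fun i => foldInf_nonneg _ _ _ hu₀ (fun j _ => hd0 j)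
  have hDu : ∀ i, D i ≤ u₀ := fun i => foldInf_le_base _ _ _
  set w : ℕ → E := fun i => c i ⊓ D i with hw
  refine ⟨w, ?_, ?_, ?_⟩
  · exact fun i _ => ⟨le_inf (hc0 i) (hD0 i), inf_le_left.trans (hcu i)⟩
  · intro i hi j hj hij
    have h1 : w i ⊓ w j ≤ c i ⊓ d i := by
      refine inf_le_inf inf_le_left ?_
      exact inf_le_right.trans (foldInf_le_mem _ _ _ (Finset.mem_erase.2 ⟨hij, hi⟩))
    rw [hcd i] at h1
    exact le_antisymm h1 (le_inf (le_inf (hc0 i) (hD0 i)) (le_inf (hc0 j) (hD0 j)))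
  · intro i hi
    have hmono : ∀ {a b : E}, a ≤ b → ψ i a ≤ ψ i b := fun h => clm_mono (hpos i hi) h
    -- ψ i (u₀ - c i) ≤ 2 * ∑ ρ i j
    have hyc : ψ i (u₀ - yh i) ≤ ∑ j ∈ F.erase i, ρ i j := by
      have h1 : u₀ - yh i ≤ ∑ j ∈ F.erase i, (u₀ - Y i j) :=
        sub_foldInf_le _ _ _ (fun j _ => hY1 i j)
      have h2 : ψ i (∑ j ∈ F.erase i, (u₀ - Y i j)) = ∑ j ∈ F.erase i, ψ i (u₀ - Y i j) :=
        map_sum (ψ i) _ _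
      refine (hmono h1).trans ?_
      rw [h2]
      refine Finset.sum_le_sum ?_
      intro j hj
      have hje := Finset.mem_erase.1 hj
      exact (hYP i j hi hje.2 (fun h => hje.1 h.symm)).1
    have hc1 : ψ i (u₀ - c i) ≤ 2 * ∑ j ∈ F.erase i, ρ i j := by
      have h1 : u₀ - c i ≤ (u₀ - yh i) + (u₀ - yh i) := by
        have hthis : yh i + yh i - u₀ ≤ c i := le_posPart _
        have h2 : u₀ - c i ≤ u₀ - (yh i + yh i - u₀) := sub_le_sub_left hthis u₀
        calc u₀ - c i ≤ u₀ - (yh i + yh i - u₀) := h2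
        _ = (u₀ - yh i) + (u₀ - yh i) := by abel
      calc ψ i (u₀ - c i) ≤ ψ i ((u₀ - yh i) + (u₀ - yh i)) := hmono h1
      _ = ψ i (u₀ - yh i) + ψ i (u₀ - yh i) := map_add _ _ _
      _ ≤ 2 * ∑ j ∈ F.erase i, ρ i j := by linarith [hyc]
    -- per j bound
    have hd1 : ∀ j ∈ F.erase i, ψ i (u₀ - d j) ≤ 2 * ρ j i := by
      intro j hj
      have hje := Finset.mem_erase.1 hj
      have h1 : u₀ - d j ≤ yh j + yh j := by
        have hp : u₀ - (yh j + yh j) ≤ d j := le_posPart _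
        exact sub_le_iff_le_add'.2 (sub_le_iff_le_add.1 hp)
      have h2 : yh j ≤ Y j i := hyhY j i (Finset.mem_erase.2 ⟨Ne.symm hje.1, hi⟩)
      have h3 : ψ i (Y j i) ≤ ρ j i := (hYP j i hje.2 hi hje.1).2
      calc ψ i (u₀ - d j) ≤ ψ i (yh j + yh j) := hmono h1
      _ = ψ i (yh j) + ψ i (yh j) := map_add _ _ _
      _ ≤ 2 * ρ j i := by
          have := hmono h2
          linarith [this, h3]
    -- assemble
    have hsplit : u₀ - w i ≤ (u₀ - c i) + (u₀ - D i) := by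
      rw [hw]
      have h1 : u₀ - (c i ⊓ D i) = (u₀ - c i) ⊔ (u₀ - D i) := sub_inf _ _ _
      rw [h1]
      exact my_sup_le_add (sub_nonneg.2 (hcu i)) (sub_nonneg.2 (hDu i))
    have hDsum : ψ i (u₀ - D i) ≤ ∑ j ∈ F.erase i, (2 * ρ j i) := by
      have h1 : u₀ - D i ≤ ∑ j ∈ F.erase i, (u₀ - d j) :=
        sub_foldInf_le _ _ _ (fun j _ => hdu j)
      refine (hmono h1).trans ?_
      rw [map_sum (ψ i) _ _]
      exact Finset.sum_le_sum hd1
    calc ψ i (u₀ - w i) ≤ ψ i ((u₀ - c i) + (u₀ - D i)) := hmono hsplit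
    _ = ψ i (u₀ - c i) + ψ i (u₀ - D i) := map_add _ _ _
    _ ≤ 2 * ∑ j ∈ F.erase i, ρ i j + ∑ j ∈ F.erase i, (2 * ρ j i) := add_le_add hc1 hDsum
    _ = 2 * ∑ j ∈ F.erase i, (ρ i j + ρ j i) := by
        rw [← Finset.mul_sum, Finset.sum_add_distrib]
        ring

/-- the rescaled functionals: value at `u₀` is exactly `δ`. -/
noncomputable def sc (u : ℕ → E →L[ℝ] ℝ) (u₀ : E) (δ : ℝ) : ℕ → E →L[ℝ] ℝ :=
  fun n => (δ / u n u₀) • u n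

section Main

variable (u : ℕ → E →L[ℝ] ℝ) (u₀ : E) (δ : ℝ)
variable (hupos : ∀ n, ∀ x : E, 0 ≤ x → 0 ≤ u n x) (hu₀ : 0 ≤ u₀)
  (hδ : 0 < δ) (hlb : ∀ n, δ ≤ u n u₀)

private lemma sc_apply (n : ℕ) (x : E) : sc u u₀ δ n x = (δ / u n u₀) * u n x := rfl

include hδ hlb in
private lemma sc_pos (hupos : ∀ n, ∀ x : E, 0 ≤ x → 0 ≤ u n x) (n : ℕ) (x : E) (hx : 0 ≤ x) :
    0 ≤ sc u u₀ δ n x := by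
  rw [sc_apply]
  have h1 : 0 < u n u₀ := lt_of_lt_of_le hδ (hlb n)
  have := hupos n x hx
  positivity

include hδ hlb in
private lemma sc_le_u (hupos : ∀ n, ∀ x : E, 0 ≤ x → 0 ≤ u n x) (n : ℕ) (x : E) (hx : 0 ≤ x) :
    sc u u₀ δ n x ≤ u n x := by
  rw [sc_apply]
  have h1 : 0 < u n u₀ := lt_of_lt_of_le hδ (hlb n)
  have h2 : δ / u n u₀ ≤ 1 := (div_le_one h1).2 (hlb n)
  have h3 := hupos n x hx
  nlinarith

include hδ hlb in
private lemma sc_u₀ (n : ℕ) : sc u u₀ δ n u₀ = δ := by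
  rw [sc_apply]
  have h1 : 0 < u n u₀ := lt_of_lt_of_le hδ (hlb n)
  field_simp

include hδ hlb in
private lemma sc_le_delta (hupos : ∀ n, ∀ x : E, 0 ≤ x → 0 ≤ u n x) (n : ℕ) (x : E)
    (hx : 0 ≤ x) (hxu : x ≤ u₀) : sc u u₀ δ n x ≤ δ := by
  have := clm_mono (sc_pos u u₀ δ hδ hlb hupos n) hxu
  rwa [sc_u₀ u u₀ δ hδ hlb n] at this

include hupos hu₀ hδ hlb in
private lemma exists_next (hfd : FinitelyDisjointDual u) (P : Finset ℕ) (b : ℕ)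
    (η : ℝ) (hη : 0 < η) :
    ∃ j, b < j ∧ ∀ s ∈ P, AD u₀ (sc u u₀ δ j) (sc u u₀ δ s) η := by
  classical
  have hqpos : ∀ n, ∀ x : E, 0 ≤ x → 0 ≤ sc u u₀ δ n x := sc_pos u u₀ δ hδ hlb hupos
  obtain ⟨K, hKdef⟩ : ∃ K : ℕ, K = Nat.floor (δ / η) := ⟨_, rfl⟩
  obtain ⟨N, hNdef⟩ : ∃ N : ℕ, N = P.card * (K + 1) + b + 2 := ⟨_, rfl⟩
  have hNpos : 0 < N := by omega
  have hNR : (0:ℝ) < (N:ℝ) := by exact_mod_cast hNpos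
  obtain ⟨i, himono, hidisj⟩ := hfd N
  obtain ⟨F, hFdef⟩ : ∃ F : Finset ℕ, F = Finset.image i Finset.univ := ⟨_, rfl⟩
  have hcardF : F.card = N := by
    rw [hFdef, Finset.card_image_of_injective _ himono.injective, Finset.card_univ,
      Fintype.card_fin]
  obtain ⟨ε₀, hε₀def⟩ : ∃ e : ℝ, e = η / (8 * N) := ⟨_, rfl⟩
  have hε₀pos : 0 < ε₀ := by rw [hε₀def]; positivity
  have hADblock : ∀ a ∈ F, ∀ a' ∈ F, a ≠ a' → AD u₀ (sc u u₀ δ a) (sc u u₀ δ a') ε₀ := by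
    intro a ha a' ha' haa'
    rw [hFdef] at ha ha'
    obtain ⟨k, -, rfl⟩ := Finset.mem_image.1 ha
    obtain ⟨l, -, rfl⟩ := Finset.mem_image.1 ha'
    have hkl : k ≠ l := fun h => haa' (by rw [h])
    obtain ⟨y, hy0, hy1, hsum⟩ := hidisj k l hkl u₀ hu₀ ε₀ hε₀pos
    have h1 : 0 ≤ u (i k) y := hupos _ y hy0
    have h2 : 0 ≤ u (i l) (u₀ - y) := hupos _ _ (sub_nonneg.2 hy1)
    refine ⟨u₀ - y, sub_nonneg.2 hy1, sub_le_self _ hy0, ?_, ?_⟩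
    · have h3 : u₀ - (u₀ - y) = y := by abel
      rw [h3]
      have := sc_le_u u u₀ δ hδ hlb hupos (i k) y hy0
      linarith
    · have := sc_le_u u u₀ δ hδ hlb hupos (i l) (u₀ - y) (sub_nonneg.2 hy1)
      linarith
  obtain ⟨w, hw0, hwdisj, hwval⟩ :=
    finite_disj u₀ hu₀ F (sc u u₀ δ) (fun a _ => hqpos a) (fun _ _ => ε₀) hADblock
  have hwval' : ∀ a ∈ F, sc u u₀ δ a (u₀ - w a) ≤ η / 2 := by
    intro a ha
    refine (hwval a ha).trans ?_
    rw [Finset.sum_const, nsmul_eq_mul]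
    have hcard : ((F.erase a).card : ℝ) ≤ (N : ℝ) := by
      have h1 : (F.erase a).card ≤ F.card := Finset.card_erase_le
      exact_mod_cast h1.trans_eq hcardF
    have hee : 0 ≤ ε₀ + ε₀ := by linarith
    have h2 : 2 * (((F.erase a).card : ℝ) * (ε₀ + ε₀)) ≤ 2 * ((N:ℝ) * (ε₀ + ε₀)) := by
      nlinarith
    refine h2.trans ?_
    rw [hε₀def]
    rw [show 2 * ((N:ℝ) * (η / (8 * N) + η / (8 * N))) = η / 2 by field_simp; ring]
  have hsum : (∑ a ∈ F, w a) ≤ u₀ := my_disj_sum_le hu₀ F w hw0 hwdisj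
  -- pigeonhole
  have hBadcard : ∀ s, (F.filter (fun a => η < sc u u₀ δ s (w a))).card ≤ K := by
    intro s
    have h1 : ((F.filter (fun a => η < sc u u₀ δ s (w a))).card : ℝ) * η ≤
        ∑ a ∈ F.filter (fun a => η < sc u u₀ δ s (w a)), sc u u₀ δ s (w a) := by
      have := Finset.card_nsmul_le_sum (F.filter (fun a => η < sc u u₀ δ s (w a)))
        (fun a => sc u u₀ δ s (w a)) η
        (fun a haB => le_of_lt (Finset.mem_filter.1 haB).2)
      rwa [nsmul_eq_mul] at this
    have h2 : ∑ a ∈ F.filter (fun a => η < sc u u₀ δ s (w a)), sc u u₀ δ s (w a)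
        ≤ ∑ a ∈ F, sc u u₀ δ s (w a) :=
      Finset.sum_le_sum_of_subset_of_nonneg (Finset.filter_subset _ _)
        (fun a haF _ => hqpos s (w a) (hw0 a haF).1)
    have h3 : ∑ a ∈ F, sc u u₀ δ s (w a) ≤ δ := by
      rw [← map_sum (sc u u₀ δ s) w F]
      have h4 : sc u u₀ δ s (∑ a ∈ F, w a) ≤ sc u u₀ δ s u₀ := clm_mono (hqpos s) hsum
      rwa [sc_u₀ u u₀ δ hδ hlb s] at h4
    have h5 : ((F.filter (fun a => η < sc u u₀ δ s (w a))).card : ℝ) ≤ δ / η := by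
      rw [le_div_iff₀ hη]; linarith
    rw [hKdef]
    exact Nat.le_floor h5
  obtain ⟨AllBad, hABdef⟩ : ∃ A : Finset ℕ,
      A = (P.biUnion (fun s => F.filter (fun a => η < sc u u₀ δ s (w a)))) ∪
        F.filter (fun a => a ≤ b) := ⟨_, rfl⟩
  have hABcard : AllBad.card < N := by
    rw [hABdef]
    have h1 : (P.biUnion (fun s => F.filter (fun a => η < sc u u₀ δ s (w a)))).card
        ≤ P.card * K := by
      refine (Finset.card_biUnion_le).trans ?_
      calc ∑ s ∈ P, (F.filter (fun a => η < sc u u₀ δ s (w a))).card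
          ≤ ∑ _s ∈ P, K := Finset.sum_le_sum (fun s _ => hBadcard s)
        _ = P.card * K := by rw [Finset.sum_const, smul_eq_mul]
    have h2 : (F.filter (fun a => a ≤ b)).card ≤ b + 1 := by
      have hsub : F.filter (fun a => a ≤ b) ⊆ Finset.range (b + 1) := by
        intro a haf
        exact Finset.mem_range.2 (Nat.lt_succ_of_le (Finset.mem_filter.1 haf).2)
      exact (Finset.card_le_card hsub).trans_eq (Finset.card_range _)
    have h3 := Finset.card_union_le
      (P.biUnion (fun s => F.filter (fun a => η < sc u u₀ δ s (w a))))
      (F.filter (fun a => a ≤ b))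
    have h4 : P.card * (K + 1) = P.card * K + P.card := by ring
    omega
  have hex : ∃ j ∈ F, j ∉ AllBad := by
    by_contra hcon
    push_neg at hcon
    have : F ⊆ AllBad := fun j hj => hcon j hj
    have := Finset.card_le_card this
    omega
  obtain ⟨j, hjF, hjAB⟩ := hex
  rw [hABdef, Finset.mem_union] at hjAB
  push_neg at hjAB
  obtain ⟨hj1, hj2⟩ := hjAB
  have hjb : b < j := by
    by_contra hc
    exact hj2 (Finset.mem_filter.2 ⟨hjF, not_lt.1 hc⟩)
  refine ⟨j, hjb, fun s hs => ?_⟩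
  have hsmall : sc u u₀ δ s (w j) ≤ η := by
    by_contra hc
    exact hj1 (Finset.mem_biUnion.2 ⟨s, hs, Finset.mem_filter.2 ⟨hjF, not_le.1 hc⟩⟩)
  exact ⟨w j, (hw0 j hjF).1, (hw0 j hjF).2, (hwval' j hjF).trans (by linarith), hsmall⟩

end Main


private noncomputable def chainA {α : Type*} (init : α) (P : ℕ → α → Prop) (R : α → α → Prop)
    (h0 : P 0 init) (hstep : ∀ k a, P k a → ∃ b, P (k+1) b ∧ R a b) : ∀ _k : ℕ, {a : α // P _k a}
  | 0 => ⟨init, h0⟩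
  | (k+1) =>
    ⟨(hstep k (chainA init P R h0 hstep k).1 (chainA init P R h0 hstep k).2).choose,
     (hstep k (chainA init P R h0 hstep k).1 (chainA init P R h0 hstep k).2).choose_spec.1⟩

private lemma chainA_rel {α : Type*} (init : α) (P : ℕ → α → Prop) (R : α → α → Prop)
    (h0 : P 0 init) (hstep : ∀ k a, P k a → ∃ b, P (k+1) b ∧ R a b) (k : ℕ) :
    R (chainA init P R h0 hstep k).1 (chainA init P R h0 hstep (k+1)).1 :=
  (hstep k (chainA init P R h0 hstep k).1 (chainA init P R h0 hstep k).2).choose_spec.2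

private def SelP (u : ℕ → E →L[ℝ] ℝ) (u₀ : E) (δ : ℝ) : ℕ → ℕ × (ℕ → ℕ) → Prop :=
  fun k st =>
    st.1 = k ∧ (∀ s t : ℕ, s ≤ k → t ≤ k → s < t → st.2 s < st.2 t) ∧
    (∀ s t : ℕ, t ≤ k → s < t →
      AD u₀ (sc u u₀ δ (st.2 t)) (sc u u₀ δ (st.2 s)) (δ * (1/2:ℝ)^(2*t)))

private def SelR : ℕ × (ℕ → ℕ) → ℕ × (ℕ → ℕ) → Prop :=
  fun st st' => ∀ t ≤ st.1, st'.2 t = st.2 t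

private lemma exists_sel (u : ℕ → E →L[ℝ] ℝ) (u₀ : E) (δ : ℝ) (hδ : 0 < δ)
    (hnext : ∀ (P : Finset ℕ) (b : ℕ) (η : ℝ), 0 < η →
      ∃ j, b < j ∧ ∀ s ∈ P, AD u₀ (sc u u₀ δ j) (sc u u₀ δ s) η) :
    ∃ m : ℕ → ℕ, StrictMono m ∧
      ∀ s t : ℕ, s < t →
        AD u₀ (sc u u₀ δ (m t)) (sc u u₀ δ (m s)) (δ * (1/2:ℝ)^(2*t)) := by
  classical
  have h0 : SelP u u₀ δ 0 (0, fun _ => 0) := by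
    unfold SelP
    exact ⟨rfl, fun s t hs ht hst => absurd hst (by omega),
      fun s t ht hst => absurd hst (by omega)⟩
  have hstep : ∀ k a, SelP u u₀ δ k a → ∃ b, SelP u u₀ δ (k+1) b ∧ SelR a b := by
    rintro k a ⟨hk, hmono, hAD⟩
    have hηpos : (0:ℝ) < δ * (1/2:ℝ)^(2*(k+1)) := by positivity
    obtain ⟨j, hbj, hjAD⟩ := hnext (Finset.image a.2 (Finset.range (k+1))) (a.2 k) _ hηpos
    refine ⟨(k+1, Function.update a.2 (k+1) j), ⟨rfl, ?_, ?_⟩, ?_⟩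
    · intro s t hs ht hst
      simp only
      by_cases htk : t ≤ k
      · rw [Function.update_of_ne (by omega), Function.update_of_ne (by omega)]
        exact hmono s t (by omega) htk hst
      · have h2 : t = k + 1 := by omega
        subst h2
        rw [Function.update_self, Function.update_of_ne (by omega)]
        have h1 : a.2 s ≤ a.2 k := by
          rcases Nat.lt_or_ge s k with h | h
          · exact le_of_lt (hmono s k (by omega) le_rfl h)
          · have h3 : s = k := by omega
            subst h3; exact le_rfl
        omega
    · intro s t ht hst
      simp only
      by_cases htk : t ≤ k
      · rw [Function.update_of_ne (by omega), Function.update_of_ne (by omega)]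
        exact hAD s t htk hst
      · have h2 : t = k + 1 := by omega
        subst h2
        rw [Function.update_self, Function.update_of_ne (by omega)]
        exact hjAD (a.2 s) (Finset.mem_image.2 ⟨s, Finset.mem_range.2 (by omega), rfl⟩)
    · unfold SelR
      intro t ht
      simp only at ht ⊢
      have htk : t ≤ k := by omega
      rw [Function.update_of_ne (by omega : t ≠ k + 1)]
  -- build the chain
  have hfst : ∀ k, (chainA (0, fun _ => 0) (SelP u u₀ δ) SelR h0 hstep k).1.1 = k :=
    fun k => (chainA (0, fun _ => 0) (SelP u u₀ δ) SelR h0 hstep k).2.1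
  have hcoh : ∀ k t, t ≤ k →
      (chainA (0, fun _ => 0) (SelP u u₀ δ) SelR h0 hstep k).1.2 t =
      (chainA (0, fun _ => 0) (SelP u u₀ δ) SelR h0 hstep t).1.2 t := by
    intro k
    induction k with
    | zero =>
      intro t ht
      have h1 : t = 0 := by omega
      subst h1; rfl
    | succ k ih =>
      intro t ht
      rcases Nat.lt_or_ge t (k+1) with h | h
      · have hb : t ≤ (chainA (0, fun _ => 0) (SelP u u₀ δ) SelR h0 hstep k).1.1 := by
          rw [hfst k]; omega
        have h1 : (chainA (0, fun _ => 0) (SelP u u₀ δ) SelR h0 hstep (k+1)).1.2 t =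
            (chainA (0, fun _ => 0) (SelP u u₀ δ) SelR h0 hstep k).1.2 t :=
          chainA_rel (0, fun _ => 0) (SelP u u₀ δ) SelR h0 hstep k t hb
        rw [h1, ih t (by omega)]
      · have h1 : t = k + 1 := by omega
        subst h1; rfl
  refine ⟨fun t => (chainA (0, fun _ => 0) (SelP u u₀ δ) SelR h0 hstep t).1.2 t, ?_, ?_⟩
  · intro s t hst
    have h1 := ((chainA (0, fun _ => 0) (SelP u u₀ δ) SelR h0 hstep t).2.2.1) s t
      (le_of_lt hst) le_rfl hst
    simp only
    rwa [hcoh t s (le_of_lt hst)] at h1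
  · intro s t hst
    have h1 := ((chainA (0, fun _ => 0) (SelP u u₀ δ) SelR h0 hstep t).2.2.2) s t le_rfl hst
    rwa [hcoh t s (le_of_lt hst)] at h1


private lemma geom_range (M : ℕ) : ∑ j ∈ Finset.range M, (1/2:ℝ)^j = 2 - 2*(1/2:ℝ)^M := by
  induction M with
  | zero => simp
  | succ M ih => rw [Finset.sum_range_succ, ih]; ring

private lemma geom_bound (s : Finset ℕ) : (∑ j ∈ s, (1/2:ℝ)^j) ≤ 2 := by
  obtain ⟨M, hM⟩ : ∃ M, s ⊆ Finset.range M := ⟨(s.sup id) + 1, fun a ha =>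
    Finset.mem_range.2 (Nat.lt_succ_of_le (Finset.le_sup (f := id) ha))⟩
  have h1 : (∑ j ∈ s, (1/2:ℝ)^j) ≤ ∑ j ∈ Finset.range M, (1/2:ℝ)^j :=
    Finset.sum_le_sum_of_subset_of_nonneg hM (fun j _ _ => by positivity)
  have h3 : (0:ℝ) ≤ (1/2:ℝ)^M := by positivity
  rw [geom_range] at h1
  linarith

section Psi

variable (g : ℕ → E →L[ℝ] ℝ) (u₀ : E) (δ : ℝ) (𝒰 : Ultrafilter ℕ)
variable (hg0 : ∀ t, ∀ x : E, 0 ≤ x → 0 ≤ g t x) (hgδ : ∀ t, g t u₀ = δ)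

include hg0 hgδ in
private lemma exists_psi :
    ∃ Ψ : E → ℝ, ∀ w : E, 0 ≤ w → w ≤ u₀ →
      Tendsto (fun t => g t w) (𝒰 : Filter ℕ) (𝓝 (Ψ w)) := by
  have h : ∀ w : E, ∃ c : ℝ, (0 ≤ w → w ≤ u₀ →
      Tendsto (fun t => g t w) (𝒰 : Filter ℕ) (𝓝 c)) := by
    intro w
    by_cases h : 0 ≤ w ∧ w ≤ u₀
    · have hmem : ∀ t, g t w ∈ Set.Icc (0:ℝ) δ := by
        intro t
        refine ⟨hg0 t w h.1, ?_⟩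
        have := clm_mono (hg0 t) h.2
        rwa [hgδ t] at this
      have hle : (Ultrafilter.map (fun t => g t w) 𝒰 : Filter ℝ) ≤ 𝓟 (Set.Icc (0:ℝ) δ) := by
        rw [Filter.le_principal_iff, Ultrafilter.coe_map, Filter.mem_map]
        exact Filter.univ_mem' hmem
      obtain ⟨c, -, hlim⟩ := isCompact_Icc.ultrafilter_le_nhds
        (Ultrafilter.map (fun t => g t w) 𝒰) hle
      rw [Ultrafilter.coe_map] at hlim
      exact ⟨c, fun _ _ => hlim⟩
    · exact ⟨0, fun h1 h2 => absurd ⟨h1, h2⟩ h⟩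
  choose Ψ hΨ using h
  exact ⟨Ψ, fun w h1 h2 => hΨ w h1 h2⟩

include hg0 hgδ in
/-- The key finiteness: only finitely many members fail to be `ρ`-disjoint from `Ψ`. -/
private lemma tbound (hu₀ : 0 ≤ u₀) (hδ : 0 < δ)
    (hAD : ∀ s t : ℕ, s < t → AD u₀ (g t) (g s) (δ * (1/2:ℝ)^(2*t)))
    (Ψ : E → ℝ)
    (hΨ : ∀ w : E, 0 ≤ w → w ≤ u₀ →
      Tendsto (fun t => g t w) (𝒰 : Filter ℕ) (𝓝 (Ψ w)))
    (ρ : ℝ) (hρ : 0 < ρ) :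
    {i : ℕ | ¬ ∃ y : E, 0 ≤ y ∧ y ≤ u₀ ∧ g i (u₀ - y) ≤ ρ ∧ Ψ y ≤ ρ}.Finite := by
  classical
  obtain ⟨t₀, ht₀⟩ : ∃ t₀ : ℕ, (1/2:ℝ)^t₀ < ρ / (8*δ) :=
    exists_pow_lt_of_lt_one (by positivity) (by norm_num)
  set B := {i : ℕ | ¬ ∃ y : E, 0 ≤ y ∧ y ≤ u₀ ∧ g i (u₀ - y) ≤ ρ ∧ Ψ y ≤ ρ} with hB
  have hsub : B ⊆ Set.Iio t₀ ∪ (B ∩ Set.Ici t₀) := by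
    intro i hi
    rcases Nat.lt_or_ge i t₀ with h | h
    · exact Or.inl h
    · exact Or.inr ⟨hi, h⟩
  refine Set.Finite.subset (Set.Finite.union (Set.finite_Iio t₀) ?_) hsub
  by_contra hinf
  have hinf' : (B ∩ Set.Ici t₀).Infinite := hinf
  obtain ⟨F, hFsub, hFcard⟩ := hinf'.exists_subset_card_eq (Nat.floor (δ/ρ) + 1)
  have hFB : ∀ i ∈ F, i ∈ B ∧ t₀ ≤ i := fun i hi => hFsub hi
  -- pairwise almost disjointness on F
  have hpairs : ∀ i ∈ F, ∀ j ∈ F, i ≠ j →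
      AD u₀ (g i) (g j) (δ * (1/2:ℝ)^(2 * max i j)) := by
    intro i _ j _ hij
    rcases Nat.lt_or_ge i j with h | h
    · have := (hAD i j h).symm
      rwa [Nat.max_eq_right (le_of_lt h)]
    · have hj : j < i := by omega
      have := hAD j i hj
      rwa [Nat.max_eq_left (le_of_lt hj)]
  obtain ⟨w, hw0, hwdisj, hwval⟩ := finite_disj u₀ hu₀ F g
    (fun i _ => hg0 i) (fun i j => δ * (1/2:ℝ)^(2 * max i j)) hpairs
  -- error bound
  have herr : ∀ i ∈ F, g i (u₀ - w i) ≤ ρ := by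
    intro i hi
    refine (hwval i hi).trans ?_
    have hterm : ∀ j ∈ F.erase i,
        δ * (1/2:ℝ)^(2 * max i j) + δ * (1/2:ℝ)^(2 * max j i)
          ≤ 2*δ*(1/2:ℝ)^i * (1/2:ℝ)^j := by
      intro j _
      rw [max_comm j i]
      have h1 : (1/2:ℝ)^(2 * max i j) ≤ (1/2:ℝ)^(i + j) := by
        apply pow_le_pow_of_le_one (by norm_num) (by norm_num)
        rcases Nat.le_total i j with h | h
        · rw [Nat.max_eq_right h]; omega
        · rw [Nat.max_eq_left h]; omega
      rw [pow_add] at h1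
      nlinarith [pow_nonneg (by norm_num : (0:ℝ) ≤ 1/2) i,
        pow_nonneg (by norm_num : (0:ℝ) ≤ 1/2) j]
    have hsum1 : ∑ j ∈ F.erase i, (δ * (1/2:ℝ)^(2 * max i j) + δ * (1/2:ℝ)^(2 * max j i))
        ≤ ∑ j ∈ F.erase i, 2*δ*(1/2:ℝ)^i * (1/2:ℝ)^j := Finset.sum_le_sum hterm
    have hsum2 : ∑ j ∈ F.erase i, 2*δ*(1/2:ℝ)^i * (1/2:ℝ)^j ≤ 2*δ*(1/2:ℝ)^i * 2 := by
      rw [← Finset.mul_sum]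
      have h0 : (0:ℝ) ≤ 2*δ*(1/2:ℝ)^i := by positivity
      exact mul_le_mul_of_nonneg_left (geom_bound _) h0
    have hit : (1/2:ℝ)^i ≤ (1/2:ℝ)^t₀ :=
      pow_le_pow_of_le_one (by norm_num) (by norm_num) (hFB i hi).2
    have hlast : 2 * (2*δ*(1/2:ℝ)^i * 2) ≤ ρ := by
      have h1 : (1/2:ℝ)^i < ρ/(8*δ) := lt_of_le_of_lt hit ht₀
      have h2 : (1/2:ℝ)^i * (8*δ) < ρ := (lt_div_iff₀ (by positivity)).1 h1
      nlinarith
    linarith [hsum1, hsum2, hlast]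
  -- each bad index gives Ψ (w i) > ρ
  have hbig : ∀ i ∈ F, ρ < Ψ (w i) := by
    intro i hi
    have hiB := (hFB i hi).1
    rw [hB] at hiB
    simp only [Set.mem_setOf_eq, not_exists] at hiB
    have := hiB (w i)
    by_contra hc
    push_neg at hc
    exact this ⟨(hw0 i hi).1, (hw0 i hi).2, herr i hi, hc⟩
  -- sum of Ψ values is at most δ
  have hsumw : (∑ i ∈ F, w i) ≤ u₀ := my_disj_sum_le hu₀ F w hw0 hwdisj
  have htend : Tendsto (fun t => ∑ i ∈ F, g t (w i)) (𝒰 : Filter ℕ)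
      (𝓝 (∑ i ∈ F, Ψ (w i))) :=
    tendsto_finset_sum F (fun i hi => hΨ (w i) (hw0 i hi).1 (hw0 i hi).2)
  have hptw : ∀ t, (∑ i ∈ F, g t (w i)) ≤ δ := by
    intro t
    rw [← map_sum (g t) w F]
    have := clm_mono (hg0 t) hsumw
    rwa [hgδ t] at this
  have hΨsum : (∑ i ∈ F, Ψ (w i)) ≤ δ :=
    le_of_tendsto htend (Filter.Eventually.of_forall hptw)
  -- contradiction
  have hFne : F.Nonempty := Finset.card_pos.1 (by omega)
  have hlt : (F.card : ℝ) * ρ < ∑ i ∈ F, Ψ (w i) := by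
    have := Finset.sum_lt_sum_of_nonempty hFne hbig
    rwa [Finset.sum_const, nsmul_eq_mul] at this
  have hfloor : (δ/ρ) < (F.card : ℝ) := by
    rw [hFcard]
    push_cast
    exact Nat.lt_floor_add_one _
  have : δ < (F.card : ℝ) * ρ := by
    rw [div_lt_iff₀ hρ] at hfloor
    linarith
  linarith

end Psi


private def ResP (Ψ : E → ℝ) (u₀ : E) (δ : ℝ) : ℕ → ℕ × E × E → Prop :=
  fun k st => 0 ≤ st.2.2 ∧ st.2.2 ≤ u₀ ∧ δ - δ/32*(1 - (1/2:ℝ)^k) ≤ Ψ st.2.2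

private def ResR (g : ℕ → E →L[ℝ] ℝ) (δ : ℝ) : ℕ × E × E → ℕ × E × E → Prop :=
  fun st st' => st.1 < st'.1 ∧ 0 ≤ st'.2.1 ∧ st'.2.1 ≤ st.2.2 ∧ st'.2.2 ≤ st.2.2 ∧
    st'.2.1 ⊓ st'.2.2 = 0 ∧ δ/2 ≤ g st'.1 st'.2.1

section Core

variable (g : ℕ → E →L[ℝ] ℝ) (u₀ : E) (δ : ℝ) (𝒰 : Ultrafilter ℕ)
variable (h𝒰 : (𝒰 : Filter ℕ) ≤ atTop) (hu₀ : 0 ≤ u₀) (hδ : 0 < δ)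
variable (hg0 : ∀ t, ∀ x : E, 0 ≤ x → 0 ≤ g t x) (hgδ : ∀ t, g t u₀ = δ)
variable (hAD : ∀ s t : ℕ, s < t → AD u₀ (g t) (g s) (δ * (1/2:ℝ)^(2*t)))
variable (Ψ : E → ℝ)
variable (hΨ : ∀ w : E, 0 ≤ w → w ≤ u₀ →
      Tendsto (fun t => g t w) (𝒰 : Filter ℕ) (𝓝 (Ψ w)))

include h𝒰 hu₀ hδ hg0 hgδ hAD hΨ in
private lemma res_step : ∀ k a, ResP Ψ u₀ δ k a → ∃ b, ResP Ψ u₀ δ (k+1) b ∧ ResR g δ a b := by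
  rintro k ⟨t, v, r⟩ ⟨hr0, hru, hΨr⟩
  simp only at hr0 hru hΨr
  have hpow0 : (0:ℝ) ≤ (1/2:ℝ)^k := by positivity
  have hpow1 : (1/2:ℝ)^k ≤ 1 := pow_le_one₀ (by norm_num) (by norm_num)
  set ρk := δ/128*(1/2:ℝ)^k with hρk
  have hρkpos : 0 < ρk := by rw [hρk]; positivity
  have hρksmall : ρk ≤ δ/128 := by rw [hρk]; nlinarith
  -- the three large sets
  have hfin := tbound g u₀ δ 𝒰 hg0 hgδ hu₀ hδ hAD Ψ hΨ ρk hρkpos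
  obtain ⟨b, hb⟩ := hfin.bddAbove
  have hS1 : {i : ℕ | b < i} ∈ (𝒰 : Filter ℕ) := h𝒰 (Ioi_mem_atTop b)
  have hS1' : {i : ℕ | ∃ y : E, 0 ≤ y ∧ y ≤ u₀ ∧ g i (u₀ - y) ≤ ρk ∧ Ψ y ≤ ρk}
      ∈ (𝒰 : Filter ℕ) := by
    refine Filter.mem_of_superset hS1 ?_
    intro i hi
    by_contra hc
    exact absurd (hb hc) (not_le.2 hi)
  have hS2 : {i : ℕ | Ψ r - ρk < g i r} ∈ (𝒰 : Filter ℕ) :=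
    (hΨ r hr0 hru).eventually (eventually_gt_nhds (by linarith))
  have hS3 : {i : ℕ | t < i} ∈ (𝒰 : Filter ℕ) := h𝒰 (Ioi_mem_atTop t)
  have hmem := Filter.inter_mem (Filter.inter_mem hS1' hS2) hS3
  obtain ⟨t', ht'⟩ := Filter.nonempty_of_mem hmem
  obtain ⟨⟨⟨y₀, hy₀0, hy₀1, hy₀2, hy₀3⟩, ht'2⟩, ht'3⟩ := ht'
  have ht'2' : Ψ r - ρk < g t' r := ht'2
  have ht'3' : t < t' := ht'3
  -- localize y to r
  set y := y₀ ⊓ r with hy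
  have hy0 : 0 ≤ y := le_inf hy₀0 hr0
  have hyr : y ≤ r := inf_le_right
  have hyy₀ : y ≤ y₀ := inf_le_left
  have hyu : y ≤ u₀ := hyy₀.trans hy₀1
  have key1 : g t' (r - y) ≤ ρk := by
    have h1 : r - y = (r - y₀) ⊔ (r - r) := sub_inf y₀ r r
    have h2 : r - y ≤ u₀ - y₀ := by
      rw [h1, sub_self]
      exact sup_le (sub_le_sub_right hru y₀) (sub_nonneg.2 hy₀1)
    exact (clm_mono (hg0 t') h2).trans hy₀2
  have key2 : Ψ y ≤ ρk := by
    have h1 : Ψ y ≤ Ψ y₀ := by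
      refine le_of_tendsto_of_tendsto' (hΨ y hy0 hyu) (hΨ y₀ hy₀0 hy₀1) ?_
      exact fun i => clm_mono (hg0 i) hyy₀
    linarith
  -- the split
  set v' := (y + y - r)⁺ with hv'
  set r' := (r - (y + y))⁺ with hr'
  have hv'0 : 0 ≤ v' := posPart_nonneg _
  have hv'y : v' ≤ y := by
    have h1 : y + y - r ≤ y := sub_le_iff_le_add.2 (add_le_add_right hyr y)
    calc v' ≤ y⁺ := posPart_mono h1
    _ = y := posPart_eq_self.2 hy0
  have hr'0 : 0 ≤ r' := posPart_nonneg _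
  have hr'r : r' ≤ r := by
    calc r' ≤ r⁺ := posPart_mono (sub_le_self r (add_nonneg hy0 hy0))
    _ = r := posPart_eq_self.2 hr0
  have hdisj : v' ⊓ r' = 0 := by
    have h := posPart_inf_negPart_eq_zero (y + y - r)
    rwa [negPart_def, neg_sub, ← posPart_def] at h
  -- value estimate
  have hval : δ/2 ≤ g t' v' := by
    have h1 : g t' (y + y - r) ≤ g t' v' := clm_mono (hg0 t') (le_posPart _)
    have h2 : g t' (y + y - r) = g t' y + g t' y - g t' r := by
      rw [map_sub, map_add]
    have h3 : g t' (r - y) = g t' r - g t' y := map_sub _ _ _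
    have h4 : δ - δ/32 ≤ Ψ r := by nlinarith
    have h5 : Ψ r ≤ δ := by
      refine le_of_tendsto_of_tendsto' (hΨ r hr0 hru) tendsto_const_nhds ?_
      intro i
      have := clm_mono (hg0 i) hru
      rw [hgδ i] at this; exact this
    linarith [key1, ht'2']
  -- Ψ r' estimate
  have hΨr' : δ - δ/32*(1 - (1/2:ℝ)^(k+1)) ≤ Ψ r' := by
    have hptw : ∀ i, g i r - 2 * g i y ≤ g i r' := by
      intro i
      have h1 : g i (r - (y+y)) ≤ g i r' := clm_mono (hg0 i) (le_posPart _)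
      have h2 : g i (r - (y+y)) = g i r - (g i y + g i y) := by rw [map_sub, map_add]
      linarith
    have htd : Tendsto (fun i => g i r - 2 * g i y) (𝒰 : Filter ℕ)
        (𝓝 (Ψ r - 2 * Ψ y)) :=
      Tendsto.sub (hΨ r hr0 hru) (Tendsto.const_mul 2 (hΨ y hy0 hyu))
    have h3 : Ψ r - 2 * Ψ y ≤ Ψ r' :=
      le_of_tendsto_of_tendsto' htd (hΨ r' hr'0 (hr'r.trans hru)) hptw
    have h4 : (1/2:ℝ)^(k+1) = (1/2:ℝ)^k * (1/2) := pow_succ _ _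
    nlinarith [key2]
  exact ⟨(t', v', r'), ⟨hr'0, hr'r.trans hru, hΨr'⟩,
    ⟨ht'3', hv'0, hv'y.trans hyr, hr'r, hdisj, hval⟩⟩

include h𝒰 hu₀ hδ hg0 hgδ hAD in
private lemma final_core :
    ∃ τ : ℕ → ℕ, StrictMono τ ∧ ∃ v : ℕ → E, (∀ k, 0 ≤ v k ∧ v k ≤ u₀) ∧
      (∀ k l, k ≠ l → v k ⊓ v l = 0) ∧ (∀ k, δ/2 ≤ g (τ k) (v k)) := by
  classical
  obtain ⟨Ψ, hΨ⟩ := exists_psi g u₀ δ 𝒰 hg0 hgδ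
  have hΨu₀ : Ψ u₀ = δ := by
    refine tendsto_nhds_unique (hΨ u₀ hu₀ le_rfl) ?_
    have : (fun t => g t u₀) = fun _ => δ := funext hgδ
    rw [this]
    exact tendsto_const_nhds
  have h0 : ResP Ψ u₀ δ 0 ((0:ℕ), (0:E), u₀) := by
    refine ⟨hu₀, le_rfl, ?_⟩
    simp only [pow_zero]
    rw [hΨu₀]
    linarith
  have hstep := res_step g u₀ δ 𝒰 h𝒰 hu₀ hδ hg0 hgδ hAD Ψ hΨ
  -- the chain
  set C := chainA ((0:ℕ), (0:E), u₀) (ResP Ψ u₀ δ) (ResR g δ) h0 hstep with hC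
  have hrel : ∀ k, ResR g δ (C k).1 (C (k+1)).1 :=
    fun k => chainA_rel ((0:ℕ), (0:E), u₀) (ResP Ψ u₀ δ) (ResR g δ) h0 hstep k
  have hP : ∀ k, ResP Ψ u₀ δ k (C k).1 := fun k => (C k).2
  -- extract data
  have hrmono : ∀ k l, k ≤ l → (C l).1.2.2 ≤ (C k).1.2.2 := by
    intro k l hkl
    induction l with
    | zero => have : k = 0 := by omega
              subst this; exact le_rfl
    | succ l ih =>
      rcases Nat.lt_or_ge k (l+1) with h | h
      · exact ((hrel l).2.2.2.1).trans (ih (by omega))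
      · have : k = l + 1 := by omega
        subst this; exact le_rfl
  refine ⟨fun k => (C (k+1)).1.1, ?_, fun k => (C (k+1)).1.2.1, ?_, ?_, ?_⟩
  · apply strictMono_nat_of_lt_succ
    intro k
    exact (hrel (k+1)).1
  · intro k
    refine ⟨(hrel k).2.1, ?_⟩
    exact ((hrel k).2.2.1).trans (((hP k).2.1))
  · -- pairwise disjoint
    have key : ∀ k l, k < l → (C (k+1)).1.2.1 ⊓ (C (l+1)).1.2.1 = 0 := by
      intro k l hkl
      have h1 : (C (l+1)).1.2.1 ≤ (C (k+1)).1.2.2 :=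
        ((hrel l).2.2.1).trans (hrmono (k+1) l (by omega))
      have h2 : (C (k+1)).1.2.1 ⊓ (C (l+1)).1.2.1 ≤
          (C (k+1)).1.2.1 ⊓ (C (k+1)).1.2.2 := inf_le_inf_left _ h1
      rw [(hrel k).2.2.2.2.1] at h2
      exact le_antisymm h2 (le_inf (hrel k).2.1 (hrel l).2.1)
    intro k l hkl
    rcases Nat.lt_or_ge k l with h | h
    · exact key k l h
    · have h2 : l < k := by omega
      rw [inf_comm]
      exact key l k h2
  · intro k
    exact (hrel k).2.2.2.2.2

end Core


/-- **Statement 8.** Let `E` be a Banach lattice and `(uₙ*)` a finitely disjoint sequence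
in `(E*)⁺`.  If there are `u₀ ∈ E⁺` and `δ > 0` with `⟨u₀, uₙ*⟩ ≥ δ` for all `n`, then
there exist a subsequence `(u*_{n_k})`, a disjoint sequence `(v_k)` in `[0,u₀]` and
`ε > 0` such that `⟨v_k, u*_{n_k}⟩ ≥ ε` for all `k`. -/
theorem exists_disjoint_witness_subsequence {E : Type*} [NormedAddCommGroup E] [Lattice E]
    [HasSolidNorm E] [IsOrderedAddMonoid E]
    [NormedSpace ℝ E] [CompleteSpace E]
    (u : ℕ → E →L[ℝ] ℝ) (hupos : ∀ n, ∀ x : E, 0 ≤ x → 0 ≤ u n x)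
    (hfd : FinitelyDisjointDual u)
    (u₀ : E) (hu₀ : 0 ≤ u₀) (δ : ℝ) (hδ : 0 < δ) (hlb : ∀ n, δ ≤ u n u₀) :
    ∃ n : ℕ → ℕ, StrictMono n ∧ ∃ v : ℕ → E,
      (∀ k, 0 ≤ v k ∧ v k ≤ u₀) ∧ (∀ k l, k ≠ l → v k ⊓ v l = 0) ∧
      ∃ ε : ℝ, 0 < ε ∧ ∀ k, ε ≤ u (n k) (v k) := by
  classical
  obtain ⟨𝒰, h𝒰⟩ := Filter.exists_ultrafilter_le (atTop : Filter ℕ)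
  have hnext : ∀ (P : Finset ℕ) (b : ℕ) (η : ℝ), 0 < η →
      ∃ j, b < j ∧ ∀ s ∈ P, AD u₀ (sc u u₀ δ j) (sc u u₀ δ s) η :=
    fun P b η hη => exists_next u u₀ δ hupos hu₀ hδ hlb hfd P b η hη
  obtain ⟨m, hm_mono, hm_AD⟩ := exists_sel u u₀ δ hδ hnext
  have hg0 : ∀ t, ∀ x : E, 0 ≤ x → 0 ≤ sc u u₀ δ (m t) x :=
    fun t => sc_pos u u₀ δ hδ hlb hupos (m t)
  have hgδ : ∀ t, sc u u₀ δ (m t) u₀ = δ := fun t => sc_u₀ u u₀ δ hδ hlb (m t)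
  obtain ⟨τ, hτ, v, hv1, hv2, hv3⟩ := final_core (fun t => sc u u₀ δ (m t)) u₀ δ 𝒰
    h𝒰 hu₀ hδ hg0 hgδ (fun s t h => hm_AD s t h)
  refine ⟨fun k => m (τ k), hm_mono.comp hτ, v, hv1, hv2, δ/2, by linarith, ?_⟩
  intro k
  have h1 := hv3 k
  have h2 := sc_le_u u u₀ δ hδ hlb hupos (m (τ k)) (v k) (hv1 k).1
  linarith
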